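/- Let (W_n) be a sequence of P-variables (each W_n defined on its own pair of probability spaces). Then (W_n) is a Cauchy sequence in the P-variables metric d_M if and only if for every integer k ≥ 1 the sequence of sets (S'_k(W_n)) is a Cauchy sequence in the Hausdorff (pseudo)metric d_H. -/

import Mathlib

set_option autoImplicit false

open MeasureTheory Set
open scoped ENNReal NNReal

noncomputable section

/-- `ℝ^n` with the Euclidean metric. -/
abbrev RE (n : ℕ) : Type := EuclideanSpace ℝ (Fin n)

/-- The random vector `(f₁(x₁), f₁(x₂), …, f_k(x₁), f_k(x₂), W(x₁,x₂,x₁₂))`. -/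
def sVec {Ω₁ Ω₂ : Type*} (k : ℕ) (f : Fin k → Ω₁ → ℝ)
    (W : Ω₁ × Ω₁ × Ω₂ → ℝ) (x : Ω₁ × Ω₁ × Ω₂) : RE (2 * k + 1) :=
  (WithLp.equiv 2 (Fin (2 * k + 1) → ℝ)).symm fun i =>
    if _ : (i : ℕ) < 2 * k then
      if (i : ℕ) % 2 = 0 then f ⟨(i : ℕ) / 2, by omega⟩ x.1
      else f ⟨(i : ℕ) / 2, by omega⟩ x.2.1
    else W x

/-- `S(f₁,…,f_k,W)`: the pushforward of the product measure `P₁ ⊗ P₁ ⊗ P₂` under `sVec`. -/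
def Smeasure {Ω₁ Ω₂ : Type*} [MeasurableSpace Ω₁] [MeasurableSpace Ω₂]
    (P₁ : Measure Ω₁) (P₂ : Measure Ω₂) {k : ℕ} (f : Fin k → Ω₁ → ℝ)
    (W : Ω₁ × Ω₁ × Ω₂ → ℝ) : Measure (RE (2 * k + 1)) :=
  (P₁.prod (P₁.prod P₂)).map (sVec k f W)

/-- The `k`-profile `S_k(W)`. -/
def SkSet {Ω₁ Ω₂ : Type*} [MeasurableSpace Ω₁] [MeasurableSpace Ω₂]
    (P₁ : Measure Ω₁) (P₂ : Measure Ω₂) (k : ℕ)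
    (W : Ω₁ × Ω₁ × Ω₂ → ℝ) : Set (Measure (RE (2 * k + 1))) :=
  {μ | ∃ f : Fin k → Ω₁ → ℝ, (∀ i, Measurable (f i)) ∧
    (∀ i x, f i x ∈ Icc (-1 : ℝ) 1) ∧ μ = Smeasure P₁ P₂ f W}

/-- A function partition: `{0,1}`-valued measurable functions summing to `1`. -/
def IsFunctionPartition {Ω₁ : Type*} [MeasurableSpace Ω₁] {k : ℕ}
    (f : Fin k → Ω₁ → ℝ) : Prop :=
  (∀ i, Measurable (f i)) ∧ (∀ i x, f i x = 0 ∨ f i x = 1) ∧ ∀ x, ∑ i, f i x = 1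

/-- The restricted `k`-profile `S'_k(W)`. -/
def SkSet' {Ω₁ Ω₂ : Type*} [MeasurableSpace Ω₁] [MeasurableSpace Ω₂]
    (P₁ : Measure Ω₁) (P₂ : Measure Ω₂) (k : ℕ)
    (W : Ω₁ × Ω₁ × Ω₂ → ℝ) : Set (Measure (RE (2 * k + 1))) :=
  {μ | ∃ f : Fin k → Ω₁ → ℝ, IsFunctionPartition f ∧ μ = Smeasure P₁ P₂ f W}

/-- Hausdorff edistance (w.r.t. the Lévy–Prokhorov distance) between sets of measures. -/
def eHausLP {X : Type*} [MeasurableSpace X] [PseudoEMetricSpace X]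
    (A B : Set (Measure X)) : ℝ≥0∞ :=
  max (⨆ μ ∈ A, ⨅ ν ∈ B, levyProkhorovEDist μ ν)
      (⨆ ν ∈ B, ⨅ μ ∈ A, levyProkhorovEDist μ ν)

/-- Hausdorff distance (w.r.t. the Lévy–Prokhorov distance) between sets of measures. -/
def dHLP {X : Type*} [MeasurableSpace X] [PseudoEMetricSpace X]
    (A B : Set (Measure X)) : ℝ := (eHausLP A B).toReal

/-- A `P`-variable: a measurable real-valued function on a product `Ω₁ × Ω₁ × Ω₂`
of probability spaces. -/
structure PVar where
  (Ω₁ : Type*)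
  (Ω₂ : Type*)
  [m₁ : MeasurableSpace Ω₁]
  [m₂ : MeasurableSpace Ω₂]
  (P₁ : Measure Ω₁)
  (P₂ : Measure Ω₂)
  (prob₁ : IsProbabilityMeasure P₁)
  (prob₂ : IsProbabilityMeasure P₂)
  (W : Ω₁ × Ω₁ × Ω₂ → ℝ)
  (meas : Measurable W)

attribute [instance] PVar.m₁ PVar.m₂

/-- The underlying product probability measure of a `P`-variable. -/
def PVar.vol (V : PVar) : Measure (V.Ω₁ × V.Ω₁ × V.Ω₂) := V.P₁.prod (V.P₁.prod V.P₂)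

/-- The `k`-profile of a `P`-variable. -/
def PVar.Sk (V : PVar) (k : ℕ) : Set (Measure (RE (2 * k + 1))) := SkSet V.P₁ V.P₂ k V.W

/-- The restricted `k`-profile of a `P`-variable. -/
def PVar.Sk' (V : PVar) (k : ℕ) : Set (Measure (RE (2 * k + 1))) := SkSet' V.P₁ V.P₂ k V.W

/-- The `P`-variables metric `d_M`. -/
def dM (V U : PVar) : ℝ :=
  ∑' k : ℕ, (2 : ℝ)⁻¹ ^ (k + 1) * dHLP (V.Sk (k + 1)) (U.Sk (k + 1))


-- ### Auxiliary lemmas ###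
open Metric

variable {X : Type*} [MeasurableSpace X] [PseudoEMetricSpace X]

lemma eHausLP_comm (A B : Set (Measure X)) : eHausLP A B = eHausLP B A := by
  unfold eHausLP
  rw [max_comm]
  congr 1 <;>
  · apply iSup_congr; intro μ; apply iSup_congr; intro _
    apply iInf_congr; intro ν; apply iInf_congr; intro _
    exact levyProkhorovEDist_comm _ _

lemma eHausLP_le' {A B : Set (Measure X)} {e : ℝ≥0∞}
    (h1 : ∀ μ ∈ A, (⨅ ν ∈ B, levyProkhorovEDist μ ν) ≤ e)
    (h2 : ∀ ν ∈ B, (⨅ μ ∈ A, levyProkhorovEDist μ ν) ≤ e) : eHausLP A B ≤ e :=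
  max_le (iSup₂_le h1) (iSup₂_le h2)

lemma eHausLP_le {A B : Set (Measure X)} {e : ℝ≥0∞}
    (h1 : ∀ μ ∈ A, ∃ ν ∈ B, levyProkhorovEDist μ ν ≤ e)
    (h2 : ∀ ν ∈ B, ∃ μ ∈ A, levyProkhorovEDist μ ν ≤ e) : eHausLP A B ≤ e := by
  refine eHausLP_le' (fun μ hμ => ?_) (fun ν hν => ?_)
  · obtain ⟨ν, hν, h⟩ := h1 μ hμ; exact iInf₂_le_of_le ν hν h
  · obtain ⟨μ, hμ, h⟩ := h2 ν hν; exact iInf₂_le_of_le μ hμ h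

lemma exists_of_eHausLP_lt_left {A B : Set (Measure X)} {e : ℝ≥0∞}
    (h : eHausLP A B < e) {μ : Measure X} (hμ : μ ∈ A) :
    ∃ ν ∈ B, levyProkhorovEDist μ ν < e := by
  have h1 : (⨆ μ ∈ A, ⨅ ν ∈ B, levyProkhorovEDist μ ν) < e :=
    lt_of_le_of_lt (le_max_left _ _) h
  have h2 : (⨅ ν ∈ B, levyProkhorovEDist μ ν) < e :=
    lt_of_le_of_lt (le_iSup₂ (f := fun μ _ => ⨅ ν ∈ B, levyProkhorovEDist μ ν) μ hμ) h1
  simpa [iInf_lt_iff] using h2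

lemma exists_of_eHausLP_lt_right {A B : Set (Measure X)} {e : ℝ≥0∞}
    (h : eHausLP A B < e) {ν : Measure X} (hν : ν ∈ B) :
    ∃ μ ∈ A, levyProkhorovEDist μ ν < e := by
  rw [eHausLP_comm] at h
  obtain ⟨μ, hμ, hc⟩ := exists_of_eHausLP_lt_left h hν
  exact ⟨μ, hμ, by rwa [levyProkhorovEDist_comm]⟩

lemma eHausLP_le_one {A B : Set (Measure X)}
    (hA : ∀ μ ∈ A, μ univ = 1) (hB : ∀ ν ∈ B, ν univ = 1)
    (hAne : A.Nonempty) (hBne : B.Nonempty) : eHausLP A B ≤ 1 := by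
  refine eHausLP_le (fun μ hμ => ?_) (fun ν hν => ?_)
  · obtain ⟨ν, hν⟩ := hBne
    refine ⟨ν, hν, (levyProkhorovEDist_le_max_measure_univ μ ν).trans ?_⟩
    rw [hA μ hμ, hB ν hν]; simp
  · obtain ⟨μ, hμ⟩ := hAne
    refine ⟨μ, hμ, (levyProkhorovEDist_le_max_measure_univ μ ν).trans ?_⟩
    rw [hA μ hμ, hB ν hν]; simp



lemma lp_map_le_of_dist_le {α : Type*} [MeasurableSpace α] {n : ℕ} (μ : Measure α)
    {φ ψ : α → RE n} (hφ : Measurable φ) (hψ : Measurable ψ) {δ : ℝ} (hδ : 0 ≤ δ)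
    (h : μ {x | δ < dist (φ x) (ψ x)} ≤ ENNReal.ofReal δ) :
    levyProkhorovEDist (μ.map φ) (μ.map ψ) ≤ ENNReal.ofReal δ := by
  have key : ∀ (φ ψ : α → RE n), Measurable φ → Measurable ψ →
      μ {x | δ < dist (φ x) (ψ x)} ≤ ENNReal.ofReal δ →
      ∀ (ε : ℝ≥0∞) (B : Set (RE n)), ENNReal.ofReal δ < ε → ε < ⊤ → MeasurableSet B →
      (μ.map φ) B ≤ (μ.map ψ) (thickening ε.toReal B) + ε := by
    intro φ ψ hφ hψ h ε B hε hεtop hB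
    have hδε : δ < ε.toReal := by
      rwa [ENNReal.ofReal_lt_iff_lt_toReal hδ hεtop.ne] at hε
    rw [Measure.map_apply hφ hB, Measure.map_apply hψ isOpen_thickening.measurableSet]
    calc μ (φ ⁻¹' B)
        ≤ μ ((ψ ⁻¹' thickening ε.toReal B) ∪ {x | δ < dist (φ x) (ψ x)}) := by
          apply measure_mono
          intro x hx
          rcases le_or_gt (dist (φ x) (ψ x)) δ with hd | hd
          · left
            rw [mem_preimage, mem_thickening_iff]
            exact ⟨φ x, hx, by rw [dist_comm]; exact lt_of_le_of_lt hd hδε⟩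
          · right; exact hd
      _ ≤ μ (ψ ⁻¹' thickening ε.toReal B) + μ {x | δ < dist (φ x) (ψ x)} :=
          measure_union_le _ _
      _ ≤ μ (ψ ⁻¹' thickening ε.toReal B) + ε := add_le_add_right (h.trans hε.le) _
  apply levyProkhorovEDist_le_of_forall
  intro ε B hε hεtop hB
  refine ⟨key φ ψ hφ hψ h ε B hε hεtop hB, key ψ φ hψ hφ ?_ ε B hε hεtop hB⟩
  simpa [dist_comm] using h

lemma lp_map_le_of_lipschitz {n m : ℕ} {L : RE n → RE m} {K : ℝ≥0} (hK : 1 ≤ K)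
    (hL : LipschitzWith K L) (μ ν : Measure (RE n)) :
    levyProkhorovEDist (μ.map L) (ν.map L) ≤ (K : ℝ≥0∞) * levyProkhorovEDist μ ν := by
  set d := levyProkhorovEDist μ ν with hd
  have hK0 : (K : ℝ≥0∞) ≠ 0 := by
    simp only [ne_eq, ENNReal.coe_eq_zero]
    exact fun h => by simp [h] at hK
  by_cases hdtop : d = ⊤
  · rw [hdtop, ENNReal.mul_top hK0]; exact le_top
  apply levyProkhorovEDist_le_of_forall
  intro ε B hε hεtop hB
  set ε' : ℝ≥0∞ := ε / K with hε'
  have hε'top : ε' < ⊤ := lt_of_le_of_lt (by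
    rw [hε', ENNReal.div_eq_inv_mul]
    calc (K : ℝ≥0∞)⁻¹ * ε ≤ 1 * ε := by
          gcongr
          exact ENNReal.inv_le_one.mpr (by exact_mod_cast hK)
      _ = ε := one_mul ε) hεtop
  have hlt : d < ε' := by
    rw [hε', ENNReal.lt_div_iff_mul_lt (Or.inl hK0) (Or.inl ENNReal.coe_ne_top)]
    rw [mul_comm]; exact hε
  have hthick : ∀ B' : Set (RE m), thickening ε'.toReal (L ⁻¹' B') ⊆ L ⁻¹' (thickening ε.toReal B') := by
    intro B' x hx
    rw [mem_thickening_iff] at hx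
    obtain ⟨z, hz, hdist⟩ := hx
    rw [mem_preimage, mem_thickening_iff]
    refine ⟨L z, hz, ?_⟩
    calc dist (L x) (L z) ≤ K * dist x z := hL.dist_le_mul x z
      _ < K * ε'.toReal := by
          apply mul_lt_mul_of_pos_left hdist
          exact_mod_cast lt_of_lt_of_le zero_lt_one hK
      _ = ((K : ℝ≥0∞) * ε').toReal := by
          rw [ENNReal.toReal_mul]; simp
      _ ≤ ε.toReal := by
          apply ENNReal.toReal_mono hεtop.ne
          rw [hε']
          exact ENNReal.mul_div_le
  have hε'le : ε' ≤ ε := by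
    rw [hε', ENNReal.div_eq_inv_mul]
    calc (K : ℝ≥0∞)⁻¹ * ε ≤ 1 * ε := by
          gcongr
          exact ENNReal.inv_le_one.mpr (by exact_mod_cast hK)
      _ = ε := one_mul ε
  have hLm : Measurable L := hL.continuous.measurable
  constructor
  · rw [Measure.map_apply hLm hB, Measure.map_apply hLm isOpen_thickening.measurableSet]
    calc μ (L ⁻¹' B) ≤ ν (thickening ε'.toReal (L ⁻¹' B)) + ε' :=
          left_measure_le_of_levyProkhorovEDist_lt hlt (hLm hB)
      _ ≤ ν (L ⁻¹' thickening ε.toReal B) + ε := add_le_add (measure_mono (hthick B)) hε'le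
  · rw [Measure.map_apply hLm hB, Measure.map_apply hLm isOpen_thickening.measurableSet]
    calc ν (L ⁻¹' B) ≤ μ (thickening ε'.toReal (L ⁻¹' B)) + ε' :=
          right_measure_le_of_levyProkhorovEDist_lt hlt (hLm hB)
      _ ≤ μ (L ⁻¹' thickening ε.toReal B) + ε := add_le_add (measure_mono (hthick B)) hε'le
section sVecLemmas
variable {Ω₁ Ω₂ : Type*} {k : ℕ} {f : Fin k → Ω₁ → ℝ} {W : Ω₁ × Ω₁ × Ω₂ → ℝ}
  {x : Ω₁ × Ω₁ × Ω₂}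

lemma sVec_apply (i : Fin (2 * k + 1)) :
    sVec k f W x i = if h : (i : ℕ) < 2 * k then
      (if (i : ℕ) % 2 = 0 then f ⟨(i : ℕ) / 2, by omega⟩ x.1
      else f ⟨(i : ℕ) / 2, by omega⟩ x.2.1)
    else W x := rfl

lemma sVec_apply_even (j : Fin k) :
    sVec k f W x ⟨2 * (j : ℕ), by omega⟩ = f j x.1 := by
  rw [sVec_apply, dif_pos (show 2 * (j : ℕ) < 2 * k by omega),
    if_pos (show 2 * (j : ℕ) % 2 = 0 by omega)]
  congr 1
  exact Fin.ext (show 2 * (j : ℕ) / 2 = (j : ℕ) by omega)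

lemma sVec_apply_odd (j : Fin k) :
    sVec k f W x ⟨2 * (j : ℕ) + 1, by omega⟩ = f j x.2.1 := by
  rw [sVec_apply, dif_pos (show 2 * (j : ℕ) + 1 < 2 * k by omega),
    if_neg (show ¬((2 * (j : ℕ) + 1) % 2 = 0) by omega)]
  congr 1
  exact Fin.ext (show (2 * (j : ℕ) + 1) / 2 = (j : ℕ) by omega)

lemma sVec_apply_last :
    sVec k f W x ⟨2 * k, by omega⟩ = W x := by
  rw [sVec_apply, dif_neg (show ¬(2 * k < 2 * k) by omega)]

lemma measurable_sVec [MeasurableSpace Ω₁] [MeasurableSpace Ω₂]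
    (hf : ∀ i, Measurable (f i)) (hW : Measurable W) : Measurable (sVec k f W) := by
  have hcont : Continuous ((WithLp.equiv 2 (Fin (2 * k + 1) → ℝ)).symm) :=
    (PiLp.continuousLinearEquiv 2 ℝ _).symm.continuous
  unfold sVec
  refine hcont.measurable.comp (measurable_pi_lambda _ fun i => ?_)
  by_cases h : (i : ℕ) < 2 * k
  · simp only [dif_pos h]
    by_cases h2 : (i : ℕ) % 2 = 0
    · simp only [if_pos h2]; exact (hf _).comp measurable_fst
    · simp only [if_neg h2]; exact (hf _).comp (measurable_fst.comp measurable_snd)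
  · simp only [dif_neg h]; exact hW
end sVecLemmas

section distLemmas
variable {n : ℕ}

lemma coord_dist_le (v w : RE n) (i : Fin n) : dist (v i) (w i) ≤ dist v w := by
  rw [EuclideanSpace.dist_eq]
  have h1 : dist (v i) (w i) ^ 2 ≤ ∑ j, dist (v j) (w j) ^ 2 :=
    Finset.single_le_sum (f := fun j => dist (v j) (w j) ^ 2)
      (fun j _ => sq_nonneg _) (Finset.mem_univ i)
  calc dist (v i) (w i) = Real.sqrt (dist (v i) (w i) ^ 2) :=
        (Real.sqrt_sq dist_nonneg).symm
    _ ≤ _ := Real.sqrt_le_sqrt h1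

lemma dist_le_of_coords (v w : RE n) {c : ℝ} (hc : 0 ≤ c)
    (h : ∀ i, dist (v i) (w i) ≤ c) : dist v w ≤ n * c := by
  rw [EuclideanSpace.dist_eq]
  have h1 : ∑ j, dist (v j) (w j) ^ 2 ≤ (n : ℝ) * c ^ 2 := by
    calc ∑ j, dist (v j) (w j) ^ 2 ≤ ∑ _j : Fin n, c ^ 2 :=
          Finset.sum_le_sum fun j _ => pow_le_pow_left₀ dist_nonneg (h j) 2
      _ = (n : ℝ) * c ^ 2 := by simp [mul_comm]
  calc Real.sqrt (∑ j, dist (v j) (w j) ^ 2) ≤ Real.sqrt ((n : ℝ) * c ^ 2) :=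
        Real.sqrt_le_sqrt h1
    _ ≤ Real.sqrt (((n : ℝ) * c) ^ 2) := by
        apply Real.sqrt_le_sqrt
        rw [mul_pow]
        apply mul_le_mul_of_nonneg_right _ (sq_nonneg c)
        calc (n : ℝ) ≤ (n : ℝ) ^ 2 := by
              rcases Nat.eq_zero_or_pos n with h0 | h0
              · simp [h0]
              · have h1 : (1 : ℝ) ≤ (n : ℝ) := by exact_mod_cast h0
                nlinarith
          _ = _ := rfl
    _ = (n : ℝ) * c := Real.sqrt_sq (by positivity)
end distLemmas

section PartitionFacts

lemma IsFunctionPartition.exists_eq_one {Ω₁ : Type*} [MeasurableSpace Ω₁] {k : ℕ}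
    {f : Fin k → Ω₁ → ℝ} (hf : IsFunctionPartition f) (y : Ω₁) :
    ∃ i, f i y = 1 ∧ ∀ j, j ≠ i → f j y = 0 := by
  have hsum := hf.2.2 y
  obtain ⟨i, -, hi⟩ : ∃ i ∈ Finset.univ, f i y ≠ 0 :=
    Finset.exists_ne_zero_of_sum_ne_zero (by rw [hsum]; norm_num)
  have h1 : f i y = 1 := (hf.2.1 i y).resolve_left hi
  refine ⟨i, h1, fun j hj => ?_⟩
  have hadd := Finset.add_sum_erase Finset.univ (fun j => f j y) (Finset.mem_univ i)
  have herase : ∑ x ∈ Finset.univ.erase i, f x y = 0 := by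
    rw [hsum, h1] at hadd
    linarith
  have hnn : ∀ x ∈ Finset.univ.erase i, 0 ≤ f x y := fun x _ => by
    rcases hf.2.1 x y with h | h <;> rw [h] <;> norm_num
  exact (Finset.sum_eq_zero_iff_of_nonneg hnn).mp herase j
    (Finset.mem_erase.mpr ⟨hj, Finset.mem_univ j⟩)

lemma IsFunctionPartition.mem_Icc {Ω₁ : Type*} [MeasurableSpace Ω₁] {k : ℕ}
    {f : Fin k → Ω₁ → ℝ} (hf : IsFunctionPartition f) :
    ∀ i x, f i x ∈ Icc (-1 : ℝ) 1 := fun i x => by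
  rcases hf.2.1 i x with h | h <;> rw [h] <;> constructor <;> norm_num

def trivPart (k : ℕ) (hk : 1 ≤ k) {Ω₁ : Type*} : Fin k → Ω₁ → ℝ :=
  fun i _ => if i = ⟨0, hk⟩ then 1 else 0

lemma isFunctionPartition_trivPart (k : ℕ) (hk : 1 ≤ k) {Ω₁ : Type*}
    [MeasurableSpace Ω₁] : IsFunctionPartition (trivPart k hk (Ω₁ := Ω₁)) := by
  refine ⟨fun i => measurable_const, fun i x => ?_, fun x => ?_⟩
  · unfold trivPart; split <;> simp
  · unfold trivPart
    rw [Finset.sum_ite_eq' Finset.univ (⟨0, hk⟩ : Fin k) (fun _ => (1 : ℝ))]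
    simp

lemma isProb_smeasure (V : PVar) {k : ℕ} {f : Fin k → V.Ω₁ → ℝ}
    (hf : ∀ i, Measurable (f i)) :
    IsProbabilityMeasure (Smeasure V.P₁ V.P₂ f V.W) := by
  haveI := V.prob₁; haveI := V.prob₂
  haveI : IsProbabilityMeasure (V.P₁.prod (V.P₁.prod V.P₂)) := by infer_instance
  exact Measure.isProbabilityMeasure_map (measurable_sVec hf V.meas).aemeasurable

lemma mem_Sk (V : PVar) {k : ℕ} {f : Fin k → V.Ω₁ → ℝ}
    (hf : ∀ i, Measurable (f i)) (hIcc : ∀ i x, f i x ∈ Icc (-1 : ℝ) 1) :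
    Smeasure V.P₁ V.P₂ f V.W ∈ V.Sk k := ⟨f, hf, hIcc, rfl⟩

lemma mem_Sk' (V : PVar) {k : ℕ} {f : Fin k → V.Ω₁ → ℝ}
    (hf : IsFunctionPartition f) :
    Smeasure V.P₁ V.P₂ f V.W ∈ V.Sk' k := ⟨f, hf, rfl⟩

lemma Sk_univ_eq_one (V : PVar) (k : ℕ) : ∀ μ ∈ V.Sk k, μ univ = 1 := by
  rintro μ ⟨f, hf, hIcc, rfl⟩
  haveI := isProb_smeasure V hf
  exact measure_univ

lemma Sk'_univ_eq_one (V : PVar) (k : ℕ) : ∀ μ ∈ V.Sk' k, μ univ = 1 := by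
  rintro μ ⟨f, hf, rfl⟩
  haveI := isProb_smeasure V hf.1
  exact measure_univ

lemma Sk_nonempty (V : PVar) (k : ℕ) : (V.Sk k).Nonempty :=
  ⟨_, mem_Sk V (f := fun _ _ => (0 : ℝ)) (fun _ => measurable_const)
    (fun _ _ => by constructor <;> norm_num)⟩

lemma Sk'_nonempty (V : PVar) (k : ℕ) (hk : 1 ≤ k) : (V.Sk' k).Nonempty :=
  ⟨_, mem_Sk' V (isFunctionPartition_trivPart k hk)⟩

lemma ehaus_Sk_le_one (V U : PVar) (k : ℕ) : eHausLP (V.Sk k) (U.Sk k) ≤ 1 :=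
  eHausLP_le_one (Sk_univ_eq_one V k) (Sk_univ_eq_one U k)
    (Sk_nonempty V k) (Sk_nonempty U k)

lemma ehaus_Sk'_le_one (V U : PVar) (k : ℕ) (hk : 1 ≤ k) :
    eHausLP (V.Sk' k) (U.Sk' k) ≤ 1 :=
  eHausLP_le_one (Sk'_univ_eq_one V k) (Sk'_univ_eq_one U k)
    (Sk'_nonempty V k hk) (Sk'_nonempty U k hk)

lemma Sk'_subset_Sk (V : PVar) (k : ℕ) : V.Sk' k ⊆ V.Sk k := by
  rintro μ ⟨f, hf, rfl⟩
  exact mem_Sk V hf.1 hf.mem_Icc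

end PartitionFacts


section Forward

def corner (k : ℕ) : Set (RE (2 * k + 1)) :=
  {v | ∃ i : Fin k, ∀ j : Fin k, v ⟨2 * (j : ℕ), by omega⟩ = if j = i then 1 else 0}

lemma measurableSet_corner (k : ℕ) : MeasurableSet (corner k) := by
  have hrw : corner k = ⋃ i : Fin k, ⋂ j : Fin k,
      (fun v : RE (2*k+1) => v ⟨2*(j:ℕ), by omega⟩) ⁻¹' {if j = i then (1:ℝ) else 0} := by
    ext v; simp [corner, Set.mem_iUnion, Set.mem_iInter]
  rw [hrw]
  exact MeasurableSet.iUnion fun i => MeasurableSet.iInter fun j =>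
    (by fun_prop : Continuous fun v : RE (2*k+1) => v ⟨2*(j:ℕ), by omega⟩).measurable (measurableSet_singleton _)

lemma forward_core (k : ℕ) (hk : 1 ≤ k) (V U : PVar) {f : Fin k → V.Ω₁ → ℝ}
    (hf : IsFunctionPartition f) {d : ℝ≥0∞}
    (hD : eHausLP (V.Sk k) (U.Sk k) < d) (hdtop : d ≠ ⊤) :
    ∃ h : Fin k → U.Ω₁ → ℝ, IsFunctionPartition h ∧
      levyProkhorovEDist (Smeasure V.P₁ V.P₂ f V.W) (Smeasure U.P₁ U.P₂ h U.W)
        ≤ (2 * (k : ℝ≥0∞) + 3) * d := by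
  classical
  haveI := V.prob₁; haveI := V.prob₂; haveI := U.prob₁; haveI := U.prob₂
  by_cases hhalf : (2 : ℝ≥0∞)⁻¹ ≤ d
  · refine ⟨trivPart k hk, isFunctionPartition_trivPart k hk, ?_⟩
    haveI := isProb_smeasure V hf.1
    haveI := isProb_smeasure U (isFunctionPartition_trivPart k hk (Ω₁ := U.Ω₁)).1
    calc levyProkhorovEDist _ _ ≤ max ((Smeasure V.P₁ V.P₂ f V.W) univ)
          ((Smeasure U.P₁ U.P₂ (trivPart k hk) U.W) univ) :=
          levyProkhorovEDist_le_max_measure_univ _ _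
      _ = 1 := by rw [measure_univ, measure_univ]; simp
      _ = 2 * 2⁻¹ := by rw [ENNReal.mul_inv_cancel (by norm_num) (by norm_num)]
      _ ≤ (2 * (k : ℝ≥0∞) + 3) * d := by
          gcongr
          calc (2:ℝ≥0∞) ≤ 3 := by norm_num
            _ ≤ 2 * (k : ℝ≥0∞) + 3 := le_add_self
  · push_neg at hhalf
    set d' := d.toReal with hd'def
    have hd'0 : 0 ≤ d' := ENNReal.toReal_nonneg
    have hd'half : d' < 1/2 := by
      rw [hd'def]
      calc d.toReal < (2⁻¹ : ℝ≥0∞).toReal := ENNReal.toReal_strict_mono (by norm_num) hhalf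
        _ = 1/2 := by norm_num
    have hofd : ENNReal.ofReal d' = d := ENNReal.ofReal_toReal hdtop
    obtain ⟨ν, hν, hLP⟩ := exists_of_eHausLP_lt_left hD (Sk'_subset_Sk V k (mem_Sk' V hf))
    obtain ⟨g, hg, hgIcc, rfl⟩ := hν
    have hμcorner : (Smeasure V.P₁ V.P₂ f V.W) (corner k) = 1 := by
      unfold Smeasure
      rw [Measure.map_apply (measurable_sVec hf.1 V.meas) (measurableSet_corner k)]
      have hpre : (sVec k f V.W) ⁻¹' (corner k) = univ := by
        ext x
        simp only [mem_preimage, mem_univ, iff_true]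
        obtain ⟨i, h1, h0⟩ := hf.exists_eq_one x.1
        refine ⟨i, fun j => ?_⟩
        rw [sVec_apply_even]
        by_cases hji : j = i
        · rw [if_pos hji, hji]; exact h1
        · rw [if_neg hji]; exact h0 j hji
      rw [hpre, measure_univ]
    set Good : Set U.Ω₁ :=
      {y | ∃ i : Fin k, ∀ j : Fin k, |g j y - (if j = i then 1 else 0)| ≤ d'} with hGoodDef
    have hGoodMeas : MeasurableSet Good := by
      have hrw : Good = ⋃ i : Fin k, ⋂ j : Fin k,
          {y | |g j y - (if j = i then 1 else 0)| ≤ d'} := by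
        ext y; simp [hGoodDef, Set.mem_iUnion, Set.mem_iInter]
      rw [hrw]
      exact MeasurableSet.iUnion fun i => MeasurableSet.iInter fun j =>
        measurableSet_le (((hg j).sub measurable_const).abs) measurable_const
    have hGoodBig : 1 ≤ U.P₁ Good + d := by
      have h1 := left_measure_le_of_levyProkhorovEDist_lt hLP (measurableSet_corner k)
      rw [hμcorner] at h1
      refine h1.trans (add_le_add_left ?_ d)
      unfold Smeasure
      rw [Measure.map_apply (measurable_sVec hg U.meas) isOpen_thickening.measurableSet]
      have hsub : (sVec k g U.W) ⁻¹' (thickening d.toReal (corner k)) ⊆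
          Good ×ˢ (univ : Set (U.Ω₁ × U.Ω₂)) := by
        intro x hx
        rw [mem_preimage, mem_thickening_iff] at hx
        obtain ⟨z, ⟨i, hz⟩, hdist⟩ := hx
        refine ⟨⟨i, fun j => ?_⟩, mem_univ _⟩
        have hc := coord_dist_le (sVec k g U.W x) z ⟨2*(j:ℕ), by omega⟩
        rw [sVec_apply_even, hz j, Real.dist_eq] at hc
        exact hc.trans hdist.le
      calc (U.P₁.prod (U.P₁.prod U.P₂)) ((sVec k g U.W) ⁻¹' thickening d.toReal (corner k))
          ≤ (U.P₁.prod (U.P₁.prod U.P₂)) (Good ×ˢ univ) := measure_mono hsub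
        _ = U.P₁ Good := by rw [Measure.prod_prod, measure_univ, mul_one]
    have hGoodCompl : U.P₁ Goodᶜ ≤ d := by
      rw [measure_compl hGoodMeas (measure_ne_top _ _), measure_univ]
      exact tsub_le_iff_left.mpr hGoodBig
    -- selection
    set selP : Fin k → U.Ω₁ → Prop := fun i y =>
      (1/2 < g i y ∧ ∀ j, j < i → g j y ≤ 1/2) ∨ (i = ⟨0, hk⟩ ∧ ∀ j, g j y ≤ 1/2)
      with hselP
    have hselUniq : ∀ y, ∃! i, selP i y := by
      intro y
      by_cases hex : ∃ j, 1/2 < g j y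
      · set S := Finset.univ.filter (fun j => 1/2 < g j y) with hS
        have hSne : S.Nonempty := by
          obtain ⟨j, hj⟩ := hex
          exact ⟨j, Finset.mem_filter.mpr ⟨Finset.mem_univ _, hj⟩⟩
        set i₀ := S.min' hSne with hi₀
        have hi₀mem : i₀ ∈ S := S.min'_mem hSne
        have hi₀big : 1/2 < g i₀ y := (Finset.mem_filter.mp hi₀mem).2
        have hi₀min : ∀ j, j < i₀ → g j y ≤ 1/2 := by
          intro j hj
          by_contra hc
          push_neg at hc
          exact absurd (S.min'_le j (Finset.mem_filter.mpr ⟨Finset.mem_univ _, hc⟩)) (not_le.mpr hj)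
        refine ⟨i₀, Or.inl ⟨hi₀big, hi₀min⟩, fun i hi => ?_⟩
        rcases hi with ⟨hibig, himin⟩ | ⟨-, hall⟩
        · rcases lt_trichotomy i i₀ with hlt | heq | hgt
          · exact absurd (hi₀min i hlt) (not_le.mpr hibig)
          · exact heq
          · exact absurd (himin i₀ hgt) (not_le.mpr hi₀big)
        · obtain ⟨j, hj⟩ := hex
          exact absurd (hall j) (not_le.mpr hj)
      · push_neg at hex
        refine ⟨⟨0, hk⟩, Or.inr ⟨rfl, hex⟩, fun i hi => ?_⟩
        rcases hi with ⟨hibig, -⟩ | ⟨hi0, -⟩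
        · exact absurd (hex i) (not_le.mpr hibig)
        · exact hi0
    set h : Fin k → U.Ω₁ → ℝ := fun i y => if selP i y then 1 else 0 with hh
    have hpart : IsFunctionPartition h := by
      refine ⟨fun i => ?_, fun i y => by by_cases hy : selP i y <;> simp [hh, hy], fun y => ?_⟩
      · have hms : MeasurableSet {y | selP i y} := by
          have hrw : {y | selP i y} =
              (({y | 1/2 < g i y} ∩ ⋂ j : Fin k, {y | j < i → g j y ≤ 1/2}) ∪
               (if i = ⟨0, hk⟩ then ⋂ j : Fin k, {y | g j y ≤ 1/2} else ∅)) := by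
            ext y
            by_cases hi0 : i = ⟨0, hk⟩ <;>
              simp [hselP, Set.mem_iInter, hi0]
          rw [hrw]
          refine MeasurableSet.union (MeasurableSet.inter
            (measurableSet_lt measurable_const (hg i))
            (MeasurableSet.iInter fun j => ?_)) ?_
          · by_cases hj : j < i
            · simp only [hj, true_implies]
              exact measurableSet_le (hg j) measurable_const
            · simp only [hj, false_implies, setOf_true]
              exact MeasurableSet.univ
          · split
            · exact MeasurableSet.iInter fun j => measurableSet_le (hg j) measurable_const
            · exact MeasurableSet.empty
        exact Measurable.ite hms measurable_const measurable_const
      · obtain ⟨i₀, hi₀, huniq⟩ := hselUniq y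
        have hcong : ∀ i, (if selP i y then (1:ℝ) else 0) = if i = i₀ then 1 else 0 := by
          intro i
          by_cases hi : selP i y
          · rw [if_pos hi, if_pos (huniq i hi)]
          · rw [if_neg hi, if_neg (fun hc => hi (by rw [hc]; exact hi₀))]
        simp only [hh]
        rw [Finset.sum_congr rfl (fun i _ => hcong i),
          Finset.sum_ite_eq' Finset.univ i₀ (fun _ => (1:ℝ))]
        simp
    have hclose : ∀ y ∈ Good, ∀ j, |g j y - h j y| ≤ d' := by
      intro y hy j
      obtain ⟨i, hi⟩ := hy
      have hgi : 1/2 < g i y := by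
        have h2 := hi i
        rw [if_pos rfl] at h2
        have h3 := abs_le.mp h2
        linarith [h3.1]
      have hgj : ∀ j', j' ≠ i → g j' y ≤ 1/2 := by
        intro j' hj'
        have h2 := hi j'
        rw [if_neg hj'] at h2
        have h3 := abs_le.mp h2
        linarith [h3.2]
      have hsel_i : selP i y := Or.inl ⟨hgi, fun j' hj' => hgj j' (ne_of_lt hj')⟩
      obtain ⟨i₀, hi₀, huniq⟩ := hselUniq y
      by_cases hji : j = i
      · rw [hji]
        simp only [hh]
        rw [if_pos hsel_i]
        have h2 := hi i
        rwa [if_pos rfl] at h2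
      · have hnsel : ¬ selP j y := fun hc => hji ((huniq j hc).trans (huniq i hsel_i).symm)
        simp only [hh]
        rw [if_neg hnsel]
        have h2 := hi j
        rwa [if_neg hji] at h2
    -- distance between the two pushforwards
    set δ : ℝ := ((2*k+2 : ℕ) : ℝ) * d' with hδ
    have hδ0 : 0 ≤ δ := by positivity
    have hLP2 : levyProkhorovEDist (Smeasure U.P₁ U.P₂ g U.W) (Smeasure U.P₁ U.P₂ h U.W)
        ≤ ENNReal.ofReal δ := by
      unfold Smeasure
      apply lp_map_le_of_dist_le _ (measurable_sVec hg U.meas)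
        (measurable_sVec hpart.1 U.meas) hδ0
      have hdistb : ∀ x : U.Ω₁ × U.Ω₁ × U.Ω₂, x.1 ∈ Good → x.2.1 ∈ Good →
          dist (sVec k g U.W x) (sVec k h U.W x) ≤ δ := by
        intro x h1 h2
        have hb := dist_le_of_coords (sVec k g U.W x) (sVec k h U.W x) hd'0 (fun i => ?_)
        · refine hb.trans ?_
          rw [hδ]
          apply mul_le_mul_of_nonneg_right _ hd'0
          exact_mod_cast Nat.le_succ (2*k+1)
        · rw [sVec_apply (f := g), sVec_apply (f := h)]
          by_cases hlt : (i:ℕ) < 2*k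
          · rw [dif_pos hlt, dif_pos hlt]
            by_cases hpar : (i:ℕ) % 2 = 0
            · rw [if_pos hpar, if_pos hpar, Real.dist_eq]
              exact hclose _ h1 _
            · rw [if_neg hpar, if_neg hpar, Real.dist_eq]
              exact hclose _ h2 _
          · rw [dif_neg hlt, dif_neg hlt, dist_self]
            exact hd'0
      have hsub : {x : U.Ω₁ × U.Ω₁ × U.Ω₂ |
          δ < dist (sVec k g U.W x) (sVec k h U.W x)} ⊆
          (Goodᶜ ×ˢ (univ : Set (U.Ω₁ × U.Ω₂))) ∪
          ((univ : Set U.Ω₁) ×ˢ (Goodᶜ ×ˢ (univ : Set U.Ω₂))) := by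
        intro x hx
        simp only [mem_setOf_eq] at hx
        by_cases h1 : x.1 ∈ Good
        · by_cases h2 : x.2.1 ∈ Good
          · exact absurd hx (not_lt.mpr (hdistb x h1 h2))
          · exact Or.inr ⟨mem_univ _, h2, mem_univ _⟩
        · exact Or.inl ⟨h1, mem_univ _⟩
      calc (U.P₁.prod (U.P₁.prod U.P₂)) {x | δ < dist (sVec k g U.W x) (sVec k h U.W x)}
          ≤ (U.P₁.prod (U.P₁.prod U.P₂)) ((Goodᶜ ×ˢ univ) ∪ (univ ×ˢ (Goodᶜ ×ˢ univ))) :=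
            measure_mono hsub
        _ ≤ (U.P₁.prod (U.P₁.prod U.P₂)) (Goodᶜ ×ˢ univ) +
            (U.P₁.prod (U.P₁.prod U.P₂)) (univ ×ˢ (Goodᶜ ×ˢ univ)) := measure_union_le _ _
        _ = U.P₁ Goodᶜ + U.P₁ Goodᶜ := by
            simp [Measure.prod_prod]
        _ ≤ d + d := add_le_add hGoodCompl hGoodCompl
        _ ≤ ENNReal.ofReal δ := by
            rw [hδ, ENNReal.ofReal_mul (by positivity), ENNReal.ofReal_natCast, hofd]
            calc d + d = 2 * d := (two_mul d).symm
              _ ≤ ((2*k+2 : ℕ) : ℝ≥0∞) * d := by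
                  gcongr
                  exact_mod_cast (by omega : 2 ≤ 2*k+2)
    refine ⟨h, hpart, ?_⟩
    calc levyProkhorovEDist (Smeasure V.P₁ V.P₂ f V.W) (Smeasure U.P₁ U.P₂ h U.W)
        ≤ levyProkhorovEDist (Smeasure V.P₁ V.P₂ f V.W) (Smeasure U.P₁ U.P₂ g U.W) +
          levyProkhorovEDist (Smeasure U.P₁ U.P₂ g U.W) (Smeasure U.P₁ U.P₂ h U.W) :=
          levyProkhorovEDist_triangle _ _ _
      _ ≤ d + ENNReal.ofReal δ := add_le_add hLP.le hLP2
      _ = d + ((2*k+2 : ℕ) : ℝ≥0∞) * d := by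
          rw [hδ, ENNReal.ofReal_mul (by positivity), ENNReal.ofReal_natCast, hofd]
      _ = (2 * (k : ℝ≥0∞) + 3) * d := by
          push_cast
          ring

end Forward


universe v₁ v₂

lemma forward_bound (k : ℕ) (hk : 1 ≤ k) (V U : PVar.{v₁, v₂}) :
    eHausLP (V.Sk' k) (U.Sk' k) ≤ (2 * (k : ℝ≥0∞) + 4) * eHausLP (V.Sk k) (U.Sk k) := by
  set D := eHausLP (V.Sk k) (U.Sk k) with hDdef
  have hDfin : D ≠ ⊤ := ((ehaus_Sk_le_one V U k).trans_lt (by norm_num)).ne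
  have hc3 : (2 * (k:ℝ≥0∞) + 3) ≠ 0 :=
    (lt_of_lt_of_le (by norm_num : (0:ℝ≥0∞) < 3) le_add_self).ne'
  have hc3top : (2 * (k:ℝ≥0∞) + 3) ≠ ⊤ := by
    apply ENNReal.add_ne_top.mpr
    exact ⟨ENNReal.mul_ne_top (by norm_num) (ENNReal.natCast_ne_top k), by norm_num⟩
  have key : ∀ (V' U' : PVar.{v₁, v₂}), eHausLP (V'.Sk k) (U'.Sk k) = D →
      ∀ μ ∈ V'.Sk' k,
      (⨅ ν ∈ U'.Sk' k, levyProkhorovEDist μ ν) ≤ (2 * (k : ℝ≥0∞) + 4) * D := by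
    intro V' U' heq μ hμ
    obtain ⟨f, hf, rfl⟩ := hμ
    apply ENNReal.le_of_forall_pos_le_add
    intro ε hε hfin
    set e := (ε : ℝ≥0∞) / (2 * (k:ℝ≥0∞) + 3) with he
    have he0 : e ≠ 0 := by
      rw [he]
      simp only [ne_eq, ENNReal.div_eq_zero_iff, not_or]
      exact ⟨by exact_mod_cast hε.ne', hc3top⟩
    have hetop : e ≠ ⊤ := (ENNReal.div_lt_top ENNReal.coe_ne_top hc3).ne
    have hd : D < D + e := ENNReal.lt_add_right hDfin he0
    obtain ⟨h, hpart, hle⟩ := forward_core k hk V' U' hf (heq ▸ hd)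
      (ENNReal.add_ne_top.mpr ⟨hDfin, hetop⟩)
    refine iInf₂_le_of_le _ (mem_Sk' U' hpart) (hle.trans ?_)
    calc (2*(k:ℝ≥0∞)+3) * (D + e) = (2*(k:ℝ≥0∞)+3)*D + (2*(k:ℝ≥0∞)+3)*e :=
          mul_add _ _ _
      _ ≤ (2*(k:ℝ≥0∞)+4)*D + ε := by
          apply add_le_add
          · apply mul_le_mul_left (by gcongr <;> norm_num)
          · rw [he]
            exact ENNReal.mul_div_le
  refine eHausLP_le' (key V U rfl) (fun ν hν => ?_)
  have h2 := key U V (by rw [hDdef, eHausLP_comm]) ν hν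
  calc (⨅ μ ∈ V.Sk' k, levyProkhorovEDist μ ν)
      = ⨅ μ ∈ V.Sk' k, levyProkhorovEDist ν μ := by
        apply iInf_congr; intro μ; apply iInf_congr; intro _
        exact levyProkhorovEDist_comm _ _
    _ ≤ _ := h2


section Backward


def gridVal (r : ℕ) (j : ℕ) : ℝ := -1 + 2 * j / r

def gridIdx (r : ℕ) (hr : 1 ≤ r) (t : ℝ) : Fin r :=
  ⟨min (r - 1) (Nat.floor ((t + 1) * r / 2)), by omega⟩

lemma gridVal_mem_Icc {r : ℕ} (hr : 1 ≤ r) {j : ℕ} (hj : j < r) :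
    gridVal r j ∈ Icc (-1 : ℝ) 1 := by
  have hr0 : (0:ℝ) < r := by exact_mod_cast hr
  have hjr : (j:ℝ) ≤ (r:ℝ) := by exact_mod_cast hj.le
  have hj0 : (0:ℝ) ≤ (j:ℝ) := Nat.cast_nonneg j
  unfold gridVal
  constructor
  · have : 0 ≤ 2 * (j:ℝ) / r := by positivity
    linarith
  · have h2 : 2 * (j:ℝ) / r ≤ 2 := by
      rw [div_le_iff₀ hr0]
      nlinarith
    linarith

lemma gridIdx_approx {r : ℕ} (hr : 1 ≤ r) {t : ℝ} (ht : t ∈ Icc (-1:ℝ) 1) :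
    |t - gridVal r (gridIdx r hr t)| ≤ 2 / r := by
  have hr0 : (0:ℝ) < r := by exact_mod_cast hr
  set y : ℝ := (t + 1) * r / 2 with hy
  have hy0 : 0 ≤ y := by
    have h1 := ht.1
    rw [hy]
    have : 0 ≤ t + 1 := by linarith
    positivity
  have hyr : y ≤ r := by
    have h2 := ht.2
    rw [hy, div_le_iff₀ (by norm_num : (0:ℝ) < 2)]
    nlinarith
  set n : ℕ := min (r - 1) (Nat.floor y) with hn
  have hidx : ((gridIdx r hr t : Fin r) : ℕ) = n := rfl
  have hnley : (n:ℝ) ≤ y := by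
    calc (n:ℝ) ≤ (Nat.floor y : ℝ) := by
          exact_mod_cast Nat.cast_le.mpr (min_le_right (r-1) (Nat.floor y))
      _ ≤ y := Nat.floor_le hy0
  have hyn1 : y - (n:ℝ) ≤ 1 := by
    rcases le_or_gt (Nat.floor y) (r-1) with hc | hc
    · have : n = Nat.floor y := by omega
      rw [this]
      have := Nat.lt_floor_add_one y
      linarith [this.le]
    · have hnval : n = r - 1 := by omega
      rw [hnval]
      have : ((r - 1 : ℕ) : ℝ) = (r:ℝ) - 1 := by
        rw [Nat.cast_sub hr]; norm_num
      rw [this]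
      linarith
  have ht2 : t + 1 = 2 * y / r := by
    rw [hy]; field_simp
  have hval : t - gridVal r n = 2 * (y - n) / r := by
    unfold gridVal
    have htt : t = 2 * y / r - 1 := by linarith
    rw [htt]
    field_simp
    ring
  rw [hidx, hval, abs_le]
  constructor
  · have : 0 ≤ 2 * (y - n) / r := by
      apply div_nonneg _ hr0.le
      linarith
    linarith [div_nonneg (by norm_num : (0:ℝ) ≤ 2) hr0.le]
  · rw [div_le_div_iff₀ hr0 hr0]
    nlinarith


variable {k r : ℕ} {Ω₁ Ω₂ : Type*} [MeasurableSpace Ω₁] [MeasurableSpace Ω₂]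

lemma measurable_gridIdx (hr : 1 ≤ r) {f : Ω₁ → ℝ} (hf : Measurable f) :
    Measurable fun y => gridIdx r hr (f y) := by
  have hm : Measurable fun y => min (r - 1) (Nat.floor ((f y + 1) * r / 2)) :=
    (measurable_const.min (((hf.add_const 1).mul_const r).div_const 2).nat_floor)
  apply measurable_to_countable'
  intro c
  have : (fun y => gridIdx r hr (f y)) ⁻¹' {c} =
      (fun y => min (r - 1) (Nat.floor ((f y + 1) * r / 2))) ⁻¹' {(c : ℕ)} := by
    ext y
    simp only [mem_preimage, mem_singleton_iff, gridIdx, Fin.ext_iff]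
  rw [this]
  exact hm (measurableSet_singleton _)

def gridCell (hr : 1 ≤ r) (f : Fin k → Ω₁ → ℝ) (y : Ω₁) : Fin (r ^ k) :=
  finFunctionFinEquiv (fun i => gridIdx r hr (f i y))

lemma measurable_gridCell (hr : 1 ≤ r) {f : Fin k → Ω₁ → ℝ}
    (hf : ∀ i, Measurable (f i)) : Measurable (gridCell hr f) := by
  apply measurable_to_countable'
  intro c
  have : (gridCell hr f) ⁻¹' {c} =
      ⋂ i : Fin k, (fun y => gridIdx r hr (f i y)) ⁻¹' {finFunctionFinEquiv.symm c i} := by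
    ext y
    simp only [mem_preimage, mem_singleton_iff, mem_iInter, gridCell]
    rw [show ((finFunctionFinEquiv fun i => gridIdx r hr (f i y)) = c ↔
        (fun i => gridIdx r hr (f i y)) = finFunctionFinEquiv.symm c) from
      Equiv.apply_eq_iff_eq_symm_apply _, funext_iff]
  rw [this]
  exact MeasurableSet.iInter fun i =>
    measurable_gridIdx hr (hf i) (measurableSet_singleton _)

def gridPart (hr : 1 ≤ r) (f : Fin k → Ω₁ → ℝ) : Fin (r ^ k) → Ω₁ → ℝ :=
  fun j y => if gridCell hr f y = j then 1 else 0

lemma isFunctionPartition_gridPart (hr : 1 ≤ r) {f : Fin k → Ω₁ → ℝ}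
    (hf : ∀ i, Measurable (f i)) : IsFunctionPartition (gridPart hr f) := by
  refine ⟨fun j => ?_, fun j y => by unfold gridPart; split <;> simp, fun y => ?_⟩
  · apply Measurable.ite _ measurable_const measurable_const
    exact measurable_gridCell hr hf (measurableSet_singleton _)
  · unfold gridPart
    rw [Finset.sum_ite_eq Finset.univ (gridCell hr f y) (fun _ => (1:ℝ))]
    simp

def cVal (r k : ℕ) : Fin k → Fin (r ^ k) → ℝ :=
  fun i j => gridVal r (finFunctionFinEquiv.symm j i)

lemma cVal_mem_Icc (hr : 1 ≤ r) (i : Fin k) (j : Fin (r ^ k)) :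
    cVal r k i j ∈ Icc (-1 : ℝ) 1 :=
  gridVal_mem_Icc hr (finFunctionFinEquiv.symm j i).isLt

lemma comb_eval {q : Fin (r ^ k) → Ω₁ → ℝ} (hq : IsFunctionPartition q)
    (i : Fin k) (y : Ω₁) :
    ∃ j₀ : Fin (r ^ k), (∑ j, cVal r k i j * q j y) = cVal r k i j₀ ∧ q j₀ y = 1 := by
  obtain ⟨j₀, h1, h0⟩ := hq.exists_eq_one y
  refine ⟨j₀, ?_, h1⟩
  rw [Finset.sum_eq_single j₀]
  · rw [h1, mul_one]
  · intro j _ hj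
    rw [h0 j hj, mul_zero]
  · intro hj
    exact absurd (Finset.mem_univ j₀) hj

lemma comb_mem_Icc (hr : 1 ≤ r) {q : Fin (r ^ k) → Ω₁ → ℝ}
    (hq : IsFunctionPartition q) :
    ∀ (i : Fin k) (y : Ω₁), (∑ j, cVal r k i j * q j y) ∈ Icc (-1 : ℝ) 1 := by
  intro i y
  obtain ⟨j₀, heq, -⟩ := comb_eval hq i y
  rw [heq]
  exact cVal_mem_Icc hr i j₀

lemma comb_measurable {q : Fin (r ^ k) → Ω₁ → ℝ} (hq : ∀ j, Measurable (q j)) :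
    ∀ i : Fin k, Measurable fun y => ∑ j, cVal r k i j * q j y := fun i =>
  Finset.measurable_sum _ fun j _ => (hq j).const_mul _

lemma gridPart_comb_eq (hr : 1 ≤ r) (f : Fin k → Ω₁ → ℝ) (i : Fin k) (y : Ω₁) :
    (∑ j, cVal r k i j * gridPart hr f j y) = gridVal r (gridIdx r hr (f i y)) := by
  rw [Finset.sum_eq_single (gridCell hr f y)]
  · unfold gridPart
    rw [if_pos rfl, mul_one]
    unfold cVal gridCell
    rw [Equiv.symm_apply_apply]
  · intro j _ hj
    unfold gridPart
    rw [if_neg (fun hc => hj hc.symm), mul_zero]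
  · intro hj
    exact absurd (Finset.mem_univ _) hj

end Backward


section MatrixComp

lemma sum_fin_even {m : ℕ} (F : Fin (2*m+1) → ℝ)
    (hF : ∀ j : Fin (2*m+1), ¬((j:ℕ) < 2*m ∧ (j:ℕ) % 2 = 0) → F j = 0) :
    ∑ j, F j = ∑ j' : Fin m, F ⟨2*(j':ℕ), by omega⟩ := by
  classical
  set ι : Fin m → Fin (2*m+1) := fun a => ⟨2*(a:ℕ), by omega⟩ with hι
  have hinj : ∀ a ∈ Finset.univ, ∀ b ∈ Finset.univ, ι a = ι b → a = b := by
    intro a _ b _ h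
    rw [hι, Fin.ext_iff] at h
    exact Fin.ext (by simpa using h)
  have hzero : ∀ j ∈ Finset.univ, j ∉ Finset.univ.image ι → F j = 0 := by
    intro j _ hj
    apply hF j
    rintro ⟨h1, h2⟩
    apply hj
    refine Finset.mem_image.mpr ⟨⟨(j:ℕ)/2, by omega⟩, Finset.mem_univ _, Fin.ext ?_⟩
    show 2 * ((j:ℕ)/2) = (j:ℕ)
    omega
  calc ∑ j, F j = ∑ j ∈ Finset.univ.image ι, F j :=
        (Finset.sum_subset (Finset.subset_univ _) hzero).symm
    _ = ∑ j' : Fin m, F (ι j') := Finset.sum_image hinj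

lemma sum_fin_odd {m : ℕ} (F : Fin (2*m+1) → ℝ)
    (hF : ∀ j : Fin (2*m+1), ¬((j:ℕ) < 2*m ∧ (j:ℕ) % 2 = 1) → F j = 0) :
    ∑ j, F j = ∑ j' : Fin m, F ⟨2*(j':ℕ)+1, by omega⟩ := by
  classical
  set ι : Fin m → Fin (2*m+1) := fun a => ⟨2*(a:ℕ)+1, by omega⟩ with hι
  have hinj : ∀ a ∈ Finset.univ, ∀ b ∈ Finset.univ, ι a = ι b → a = b := by
    intro a _ b _ h
    rw [hι, Fin.ext_iff] at h
    exact Fin.ext (by simpa using h)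
  have hzero : ∀ j ∈ Finset.univ, j ∉ Finset.univ.image ι → F j = 0 := by
    intro j _ hj
    apply hF j
    rintro ⟨h1, h2⟩
    apply hj
    refine Finset.mem_image.mpr ⟨⟨(j:ℕ)/2, by omega⟩, Finset.mem_univ _, Fin.ext ?_⟩
    show 2 * ((j:ℕ)/2) + 1 = (j:ℕ)
    omega
  calc ∑ j, F j = ∑ j ∈ Finset.univ.image ι, F j :=
        (Finset.sum_subset (Finset.subset_univ _) hzero).symm
    _ = ∑ j' : Fin m, F (ι j') := Finset.sum_image hinj

def bmat (k r : ℕ) : Matrix (Fin (2*k+1)) (Fin (2*(r^k)+1)) ℝ :=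
  fun i j =>
    if hi : (i:ℕ) < 2*k then
      (if hj : (j:ℕ) < 2*(r^k) ∧ (j:ℕ) % 2 = (i:ℕ) % 2 then
        cVal r k ⟨(i:ℕ)/2, by omega⟩ ⟨(j:ℕ)/2, by omega⟩ else 0)
    else (if (j:ℕ) = 2*(r^k) then 1 else 0)

def bmap (k r : ℕ) : RE (2*(r^k)+1) →L[ℝ] RE (2*k+1) :=
  LinearMap.toContinuousLinearMap (Matrix.toEuclideanLin (bmat k r))

lemma bmap_apply {k r : ℕ} (v : RE (2*(r^k)+1)) (i : Fin (2*k+1)) :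
    bmap k r v i = ∑ j, bmat k r i j * v j := by
  show (LinearMap.toContinuousLinearMap (Matrix.toEuclideanLin (bmat k r))) v i = _
  rw [LinearMap.coe_toContinuousLinearMap']
  rw [Matrix.toEuclideanLin_apply]
  simp [Matrix.mulVec, dotProduct]

lemma bmap_sVec {k r : ℕ} {Ω₁ Ω₂ : Type*} (q : Fin (r^k) → Ω₁ → ℝ)
    (W : Ω₁ × Ω₁ × Ω₂ → ℝ) (x : Ω₁ × Ω₁ × Ω₂) :
    bmap k r (sVec (r^k) q W x) = sVec k (fun i y => ∑ j, cVal r k i j * q j y) W x := by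
  ext i
  rw [bmap_apply, sVec_apply]
  by_cases hi : (i:ℕ) < 2*k
  · rw [dif_pos hi]
    by_cases hpar : (i:ℕ) % 2 = 0
    · rw [if_pos hpar]
      rw [sum_fin_even (fun j => bmat k r i j * sVec (r^k) q W x j) ?_]
      · simp only
        apply Finset.sum_congr rfl
        intro j' _
        rw [sVec_apply_even]
        have hb : bmat k r i ⟨2*((j' : Fin (r^k)):ℕ), by omega⟩ =
            cVal r k ⟨(i:ℕ)/2, by omega⟩ j' := by
          have hval : ((⟨2*((j' : Fin (r^k)):ℕ), by omega⟩ : Fin (2*(r^k)+1)) : ℕ) =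
              2*((j' : Fin (r^k)):ℕ) := rfl
          unfold bmat
          simp only [hval]
          rw [dif_pos hi, dif_pos (⟨by omega, by omega⟩ :
            2*((j' : Fin (r^k)):ℕ) < 2*(r^k) ∧ (2*((j' : Fin (r^k)):ℕ)) % 2 = (i:ℕ) % 2)]
          have hj2 : (⟨(2*((j' : Fin (r^k)):ℕ))/2, by omega⟩ : Fin (r^k)) = j' :=
            Fin.ext (by show 2*((j' : Fin (r^k)):ℕ)/2 = _; omega)
          rw [hj2]
        rw [hb]
      · intro j hj
        show bmat k r i j * _ = 0
        unfold bmat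
        rw [dif_pos hi, dif_neg, zero_mul]
        rintro ⟨h1, h2⟩
        exact hj ⟨h1, by omega⟩
    · rw [if_neg hpar]
      rw [sum_fin_odd (fun j => bmat k r i j * sVec (r^k) q W x j) ?_]
      · simp only
        apply Finset.sum_congr rfl
        intro j' _
        rw [sVec_apply_odd]
        have hb : bmat k r i ⟨2*((j' : Fin (r^k)):ℕ)+1, by omega⟩ =
            cVal r k ⟨(i:ℕ)/2, by omega⟩ j' := by
          have hval : ((⟨2*((j' : Fin (r^k)):ℕ)+1, by omega⟩ : Fin (2*(r^k)+1)) : ℕ) =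
              2*((j' : Fin (r^k)):ℕ)+1 := rfl
          unfold bmat
          simp only [hval]
          rw [dif_pos hi, dif_pos (⟨by omega, by omega⟩ :
            2*((j' : Fin (r^k)):ℕ)+1 < 2*(r^k) ∧ (2*((j' : Fin (r^k)):ℕ)+1) % 2 = (i:ℕ) % 2)]
          have hj2 : (⟨(2*((j' : Fin (r^k)):ℕ)+1)/2, by omega⟩ : Fin (r^k)) = j' :=
            Fin.ext (by show (2*((j' : Fin (r^k)):ℕ)+1)/2 = _; omega)
          rw [hj2]
        rw [hb]
      · intro j hj
        show bmat k r i j * _ = 0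
        unfold bmat
        rw [dif_pos hi, dif_neg, zero_mul]
        rintro ⟨h1, h2⟩
        exact hj ⟨h1, by omega⟩
  · rw [dif_neg hi]
    rw [Finset.sum_eq_single (⟨2*(r^k), by omega⟩ : Fin (2*(r^k)+1))]
    · rw [sVec_apply_last]
      show bmat k r i ⟨2*(r^k), by omega⟩ * W x = W x
      unfold bmat
      rw [dif_neg hi, if_pos rfl, one_mul]
    · intro j _ hj
      show bmat k r i j * _ = 0
      unfold bmat
      rw [dif_neg hi, if_neg (fun hc => hj (Fin.ext hc)), zero_mul]
    · intro hmem
      exact absurd (Finset.mem_univ _) hmem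

lemma smeasure_comb {k r : ℕ} (V : PVar) {q : Fin (r^k) → V.Ω₁ → ℝ}
    (hq : ∀ j, Measurable (q j)) :
    Smeasure V.P₁ V.P₂ (fun i y => ∑ j, cVal r k i j * q j y) V.W =
      (Smeasure V.P₁ V.P₂ q V.W).map (bmap k r) := by
  unfold Smeasure
  rw [Measure.map_map (bmap k r).continuous.measurable (measurable_sVec hq V.meas)]
  congr 1
  funext x
  exact (bmap_sVec q V.W x).symm

end MatrixComp


lemma backward_bound (k r : ℕ) (hr : 1 ≤ r) :
    ∃ K : ℝ≥0, 1 ≤ K ∧ ∀ (V U : PVar.{v₁, v₂}) (ρ : ℝ≥0∞), ρ ≠ ⊤ →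
      eHausLP (V.Sk' (r^k)) (U.Sk' (r^k)) < ρ →
      eHausLP (V.Sk k) (U.Sk k) ≤
        (K : ℝ≥0∞) * ρ + ENNReal.ofReal ((2*(k:ℝ)+2) * (2/(r:ℝ))) := by
  classical
  refine ⟨max 1 ‖bmap k r‖₊, le_max_left _ _, ?_⟩
  have hK1 : (1 : ℝ≥0) ≤ max 1 ‖bmap k r‖₊ := le_max_left _ _
  have hLip : LipschitzWith (max 1 ‖bmap k r‖₊) (bmap k r) :=
    (bmap k r).lipschitz.weaken (le_max_right _ _)
  have hr0 : (0:ℝ) < r := by exact_mod_cast hr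
  have hδr0 : (0:ℝ) ≤ (2*(k:ℝ)+2) * (2/(r:ℝ)) := by positivity
  have key : ∀ (V' U' : PVar.{v₁, v₂}) (ρ : ℝ≥0∞), ρ ≠ ⊤ →
      eHausLP (V'.Sk' (r^k)) (U'.Sk' (r^k)) < ρ →
      ∀ μ ∈ V'.Sk k, ∃ ν ∈ U'.Sk k,
        levyProkhorovEDist μ ν ≤ (max 1 ‖bmap k r‖₊ : ℝ≥0∞) * ρ +
          ENNReal.ofReal ((2*(k:ℝ)+2) * (2/(r:ℝ))) := by
    intro V' U' ρ hρtop hH μ hμ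
    haveI := V'.prob₁; haveI := V'.prob₂; haveI := U'.prob₁; haveI := U'.prob₂
    obtain ⟨f, hf, hfIcc, rfl⟩ := hμ
    have hppart := isFunctionPartition_gridPart hr hf
    obtain ⟨ν, hν, hLPpq⟩ := exists_of_eHausLP_lt_left hH (mem_Sk' V' hppart)
    obtain ⟨q, hq, rfl⟩ := hν
    have hgVeq : ∀ (i : Fin k) (y : V'.Ω₁),
        (∑ j, cVal r k i j * gridPart hr f j y) = gridVal r (gridIdx r hr (f i y)) :=
      fun i y => gridPart_comb_eq hr f i y
    have hstep1 : levyProkhorovEDist (Smeasure V'.P₁ V'.P₂ f V'.W)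
        (Smeasure V'.P₁ V'.P₂ (fun i y => ∑ j, cVal r k i j * gridPart hr f j y) V'.W)
        ≤ ENNReal.ofReal ((2*(k:ℝ)+2) * (2/(r:ℝ))) := by
      unfold Smeasure
      apply lp_map_le_of_dist_le _ (measurable_sVec hf V'.meas)
        (measurable_sVec (comb_measurable (fun j => hppart.1 j)) V'.meas) hδr0
      have hempty : {x : V'.Ω₁ × V'.Ω₁ × V'.Ω₂ |
          (2*(k:ℝ)+2) * (2/(r:ℝ)) < dist (sVec k f V'.W x)
            (sVec k (fun i y => ∑ j, cVal r k i j * gridPart hr f j y) V'.W x)} = ∅ := by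
        rw [eq_empty_iff_forall_notMem]
        intro x hx
        simp only [mem_setOf_eq] at hx
        apply absurd hx
        apply not_lt.mpr
        have hcoord : ∀ i, dist (sVec k f V'.W x i)
            (sVec k (fun i y => ∑ j, cVal r k i j * gridPart hr f j y) V'.W x i)
            ≤ 2/(r:ℝ) := by
          intro i
          rw [sVec_apply (f := f),
            sVec_apply (f := fun i y => ∑ j, cVal r k i j * gridPart hr f j y)]
          by_cases hi : (i:ℕ) < 2*k
          · rw [dif_pos hi, dif_pos hi]
            by_cases hpar : (i:ℕ) % 2 = 0
            · rw [if_pos hpar, if_pos hpar, Real.dist_eq]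
              rw [hgVeq]
              exact gridIdx_approx hr (hfIcc _ _)
            · rw [if_neg hpar, if_neg hpar, Real.dist_eq]
              rw [hgVeq]
              exact gridIdx_approx hr (hfIcc _ _)
          · rw [dif_neg hi, dif_neg hi, dist_self]
            positivity
        have hd := dist_le_of_coords (sVec k f V'.W x)
          (sVec k (fun i y => ∑ j, cVal r k i j * gridPart hr f j y) V'.W x)
          (show (0:ℝ) ≤ 2/(r:ℝ) by positivity) hcoord
        refine hd.trans ?_
        apply mul_le_mul_of_nonneg_right _ (by positivity)
        push_cast
        linarith
      rw [hempty]
      simp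
    have hstep2 : levyProkhorovEDist
        (Smeasure V'.P₁ V'.P₂ (fun i y => ∑ j, cVal r k i j * gridPart hr f j y) V'.W)
        (Smeasure U'.P₁ U'.P₂ (fun i y => ∑ j, cVal r k i j * q j y) U'.W)
        ≤ (max 1 ‖bmap k r‖₊ : ℝ≥0∞) * ρ := by
      rw [smeasure_comb V' (fun j => hppart.1 j), smeasure_comb U' (fun j => hq.1 j)]
      exact (lp_map_le_of_lipschitz hK1 hLip _ _).trans (mul_le_mul_right hLPpq.le _)
    refine ⟨Smeasure U'.P₁ U'.P₂ (fun i y => ∑ j, cVal r k i j * q j y) U'.W,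
      mem_Sk U' (comb_measurable (fun j => hq.1 j)) (comb_mem_Icc hr hq), ?_⟩
    calc levyProkhorovEDist (Smeasure V'.P₁ V'.P₂ f V'.W)
          (Smeasure U'.P₁ U'.P₂ (fun i y => ∑ j, cVal r k i j * q j y) U'.W)
        ≤ levyProkhorovEDist (Smeasure V'.P₁ V'.P₂ f V'.W)
            (Smeasure V'.P₁ V'.P₂ (fun i y => ∑ j, cVal r k i j * gridPart hr f j y) V'.W) +
          levyProkhorovEDist
            (Smeasure V'.P₁ V'.P₂ (fun i y => ∑ j, cVal r k i j * gridPart hr f j y) V'.W)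
            (Smeasure U'.P₁ U'.P₂ (fun i y => ∑ j, cVal r k i j * q j y) U'.W) :=
          levyProkhorovEDist_triangle _ _ _
      _ ≤ ENNReal.ofReal ((2*(k:ℝ)+2) * (2/(r:ℝ))) + (max 1 ‖bmap k r‖₊ : ℝ≥0∞) * ρ :=
          add_le_add hstep1 hstep2
      _ = (max 1 ‖bmap k r‖₊ : ℝ≥0∞) * ρ + ENNReal.ofReal ((2*(k:ℝ)+2) * (2/(r:ℝ))) :=
          add_comm _ _
  intro V U ρ hρtop hH
  refine eHausLP_le (key V U ρ hρtop hH) (fun ν hν => ?_)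
  obtain ⟨μ, hμ, hle⟩ := key U V ρ hρtop (by rwa [eHausLP_comm]) ν hν
  exact ⟨μ, hμ, by rwa [levyProkhorovEDist_comm]⟩


section Glue

lemma dHLP_nonneg {X : Type*} [MeasurableSpace X] [PseudoEMetricSpace X]
    (A B : Set (Measure X)) : 0 ≤ dHLP A B := ENNReal.toReal_nonneg

lemma ehaus_Sk_ne_top (V U : PVar.{v₁, v₂}) (k : ℕ) :
    eHausLP (V.Sk k) (U.Sk k) ≠ ⊤ :=
  ((ehaus_Sk_le_one V U k).trans_lt (by norm_num)).ne

lemma dHLP_Sk_le_one (V U : PVar.{v₁, v₂}) (k : ℕ) :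
    dHLP (V.Sk k) (U.Sk k) ≤ 1 := by
  have h := ehaus_Sk_le_one V U k
  unfold dHLP
  calc (eHausLP (V.Sk k) (U.Sk k)).toReal ≤ (1 : ℝ≥0∞).toReal :=
        ENNReal.toReal_mono (by norm_num) h
    _ = 1 := by simp

lemma summable_half_pow : Summable (fun j : ℕ => (2:ℝ)⁻¹ ^ (j+1)) := by
  have hg0 : Summable (fun j : ℕ => (2:ℝ)⁻¹ ^ j) :=
    summable_geometric_of_lt_one (by norm_num) (by norm_num)
  have he : (fun j : ℕ => (2:ℝ)⁻¹ ^ (j+1)) = fun j : ℕ => (2:ℝ)⁻¹ ^ j * 2⁻¹ := by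
    funext j; rw [pow_succ]
  rw [he]; exact hg0.mul_right _

lemma dM_summable (V U : PVar.{v₁, v₂}) :
    Summable (fun j : ℕ => (2:ℝ)⁻¹ ^ (j+1) * dHLP (V.Sk (j+1)) (U.Sk (j+1))) := by
  have hg : Summable (fun j : ℕ => (2:ℝ)⁻¹ ^ (j+1)) := summable_half_pow
  refine Summable.of_nonneg_of_le
    (fun j => mul_nonneg (by positivity) (dHLP_nonneg _ _)) (fun j => ?_) hg
  have h1 := dHLP_Sk_le_one V U (j+1)
  calc (2:ℝ)⁻¹ ^ (j+1) * dHLP (V.Sk (j+1)) (U.Sk (j+1))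
      ≤ (2:ℝ)⁻¹ ^ (j+1) * 1 := mul_le_mul_of_nonneg_left h1 (by positivity)
    _ = (2:ℝ)⁻¹ ^ (j+1) := mul_one _

lemma tsum_half_pow : ∑' j : ℕ, (2:ℝ)⁻¹ ^ (j+1) = 1 := by
  have h1 : ∀ j : ℕ, (2:ℝ)⁻¹ ^ (j+1) = (2:ℝ)⁻¹ ^ j * 2⁻¹ := fun j => pow_succ _ _
  rw [tsum_congr h1, tsum_mul_right,
    tsum_geometric_of_lt_one (by norm_num) (by norm_num)]
  norm_num

lemma dHLP_Sk_le_dM (j : ℕ) (V U : PVar.{v₁, v₂}) :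
    dHLP (V.Sk (j+1)) (U.Sk (j+1)) ≤ 2^(j+1) * dM V U := by
  have hterm : (2:ℝ)⁻¹ ^ (j+1) * dHLP (V.Sk (j+1)) (U.Sk (j+1)) ≤ dM V U :=
    Summable.le_tsum (dM_summable V U) j
      (fun i _ => mul_nonneg (by positivity) (dHLP_nonneg _ _))
  calc dHLP (V.Sk (j+1)) (U.Sk (j+1))
      = 2^(j+1) * ((2:ℝ)⁻¹ ^ (j+1) * dHLP (V.Sk (j+1)) (U.Sk (j+1))) := by
        rw [← mul_assoc, ← mul_pow]
        norm_num
    _ ≤ 2^(j+1) * dM V U := mul_le_mul_of_nonneg_left hterm (by positivity)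

lemma dHLP_forward (k : ℕ) (hk : 1 ≤ k) (V U : PVar.{v₁, v₂}) :
    dHLP (V.Sk' k) (U.Sk' k) ≤ (2*(k:ℝ)+4) * dHLP (V.Sk k) (U.Sk k) := by
  have h := forward_bound k hk V U
  have hfin := ehaus_Sk_ne_top V U k
  have hCfin : (2*(k:ℝ≥0∞)+4) ≠ ⊤ :=
    ENNReal.add_ne_top.mpr ⟨ENNReal.mul_ne_top (by norm_num) (ENNReal.natCast_ne_top k),
      by norm_num⟩
  unfold dHLP
  calc (eHausLP (V.Sk' k) (U.Sk' k)).toReal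
      ≤ ((2*(k:ℝ≥0∞)+4) * eHausLP (V.Sk k) (U.Sk k)).toReal :=
        ENNReal.toReal_mono (ENNReal.mul_ne_top hCfin hfin) h
    _ = (2*(k:ℝ)+4) * (eHausLP (V.Sk k) (U.Sk k)).toReal := by
        rw [ENNReal.toReal_mul]
        congr 1

end Glue

universe u₁ u₂

set_option maxHeartbeats 1000000

/-- A sequence `(W_n)` of P-variables (each on its own pair of
probability spaces) is Cauchy in the P-variables metric `d_M` if and only if for every
integer `k ≥ 1` the sequence of restricted profiles `(S'_k(W_n))` is Cauchy in the
Hausdorff (pseudo)metric `d_H`. -/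
theorem dM_cauchy_iff_Sk'_cauchy (V : ℕ → PVar.{u₁, u₂}) :
    (∀ ε > (0 : ℝ), ∃ N : ℕ, ∀ m ≥ N, ∀ n ≥ N, dM (V m) (V n) < ε) ↔
    (∀ k : ℕ, 1 ≤ k →
      ∀ ε > (0 : ℝ), ∃ N : ℕ, ∀ m ≥ N, ∀ n ≥ N,
        dHLP ((V m).Sk' k) ((V n).Sk' k) < ε) := by
  constructor
  · intro hC k hk ε hε
    obtain ⟨j, rfl⟩ : ∃ j, k = j + 1 := ⟨k - 1, by omega⟩
    have hCpos : (0:ℝ) < (2*((j+1:ℕ):ℝ)+4) * 2^(j+1) := by positivity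
    obtain ⟨N, hN⟩ := hC (ε / ((2*((j+1:ℕ):ℝ)+4) * 2^(j+1))) (by positivity)
    refine ⟨N, fun m hm n hn => ?_⟩
    have h1 := dHLP_forward (j+1) (by omega) (V m) (V n)
    have h2 := dHLP_Sk_le_dM j (V m) (V n)
    have h3 := hN m hm n hn
    calc dHLP ((V m).Sk' (j+1)) ((V n).Sk' (j+1))
        ≤ (2*((j+1:ℕ):ℝ)+4) * 2^(j+1) * dM (V m) (V n) := by
          rw [mul_assoc]
          exact h1.trans (mul_le_mul_of_nonneg_left h2 (by positivity))
      _ < (2*((j+1:ℕ):ℝ)+4) * 2^(j+1) * (ε / ((2*((j+1:ℕ):ℝ)+4) * 2^(j+1))) :=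
          mul_lt_mul_of_pos_left h3 hCpos
      _ = ε := by field_simp
  · intro hC ε hε
    obtain ⟨K₀, hK₀⟩ : ∃ K₀ : ℕ, ((2:ℝ)⁻¹)^K₀ < ε/2 :=
      exists_pow_lt_of_lt_one (by positivity) (by norm_num)
    have hchoice : ∀ j : ℕ, ∃ Nj : ℕ, ∀ m ≥ Nj, ∀ n ≥ Nj,
        dHLP ((V m).Sk (j+1)) ((V n).Sk (j+1)) < ε/2 := by
      intro j
      obtain ⟨r₀, hr₀⟩ := exists_nat_gt ((2*((j+1:ℕ):ℝ)+2) * 2 * (4/ε))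
      set r := max r₀ 1 with hrdef
      have hr : 1 ≤ r := le_max_right _ _
      have hrR : (0:ℝ) < r := by exact_mod_cast hr
      have hle : (2*((j+1:ℕ):ℝ)+2) * 2 * (4/ε) < (r:ℝ) := by
        refine lt_of_lt_of_le hr₀ ?_
        exact_mod_cast le_max_left r₀ 1
      have hrb : (2*((j+1:ℕ):ℝ)+2) * (2/(r:ℝ)) < ε/4 := by
        rw [show (2*((j+1:ℕ):ℝ)+2) * (2/(r:ℝ)) = ((2*((j+1:ℕ):ℝ)+2)*2)/(r:ℝ) from by
          ring]
        rw [div_lt_iff₀ hrR]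
        have hmul := mul_lt_mul_of_pos_left hle (show (0:ℝ) < ε/4 by positivity)
        have hid : (ε/4) * ((2*((j+1:ℕ):ℝ)+2)*2*(4/ε)) = (2*((j+1:ℕ):ℝ)+2)*2 := by
          field_simp
        rw [hid] at hmul
        linarith
      obtain ⟨K, hK1, hKb⟩ := backward_bound (j+1) r hr
      have hKpos : (0:ℝ) < (K:ℝ) := lt_of_lt_of_le one_pos (by exact_mod_cast hK1)
      have hδpos : (0:ℝ) < ε/(4*(K:ℝ)) := by positivity
      obtain ⟨Nj, hNj⟩ := hC (r^(j+1)) (Nat.one_le_pow _ _ (by omega)) (ε/(4*(K:ℝ))) hδpos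
      refine ⟨Nj, fun m hm n hn => ?_⟩
      have hd := hNj m hm n hn
      have hfin : eHausLP ((V m).Sk' (r^(j+1))) ((V n).Sk' (r^(j+1))) ≠ ⊤ :=
        ((ehaus_Sk'_le_one _ _ _ (Nat.one_le_pow _ _ (by omega))).trans_lt (by norm_num)).ne
      have hlt : eHausLP ((V m).Sk' (r^(j+1))) ((V n).Sk' (r^(j+1))) <
          ENNReal.ofReal (ε/(4*(K:ℝ))) := by
        rw [← ENNReal.ofReal_toReal hfin]
        exact (ENNReal.ofReal_lt_ofReal_iff_of_nonneg ENNReal.toReal_nonneg).mpr hd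
      have hB := hKb (V m) (V n) _ ENNReal.ofReal_ne_top hlt
      have hKδ : (K:ℝ≥0∞) * ENNReal.ofReal (ε/(4*(K:ℝ))) = ENNReal.ofReal (ε/4) := by
        rw [← ENNReal.ofReal_coe_nnreal, ← ENNReal.ofReal_mul K.coe_nonneg]
        congr 1
        field_simp
      rw [hKδ] at hB
      calc dHLP ((V m).Sk (j+1)) ((V n).Sk (j+1))
          ≤ (ENNReal.ofReal (ε/4) +
              ENNReal.ofReal ((2*((j+1:ℕ):ℝ)+2)*(2/(r:ℝ)))).toReal :=
            ENNReal.toReal_mono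
              (ENNReal.add_ne_top.mpr ⟨ENNReal.ofReal_ne_top, ENNReal.ofReal_ne_top⟩) hB
        _ = ε/4 + (2*((j+1:ℕ):ℝ)+2)*(2/(r:ℝ)) := by
            rw [ENNReal.toReal_add ENNReal.ofReal_ne_top ENNReal.ofReal_ne_top,
              ENNReal.toReal_ofReal (by positivity), ENNReal.toReal_ofReal (by positivity)]
        _ < ε/2 := by linarith
    choose Nfun hNfun using hchoice
    refine ⟨(Finset.range K₀).sup Nfun, fun m hm n hn => ?_⟩
    have hsum : Summable (fun j : ℕ =>
        (2:ℝ)⁻¹ ^ (j+1) * dHLP ((V m).Sk (j+1)) ((V n).Sk (j+1))) :=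
      dM_summable (V m) (V n)
    have hsplit := Summable.sum_add_tsum_nat_add (f := fun j : ℕ =>
        (2:ℝ)⁻¹ ^ (j+1) * dHLP ((V m).Sk (j+1)) ((V n).Sk (j+1))) K₀ hsum
    have hdm : dM (V m) (V n) =
        (∑ j ∈ Finset.range K₀,
          (2:ℝ)⁻¹^(j+1) * dHLP ((V m).Sk (j+1)) ((V n).Sk (j+1)))
        + ∑' j : ℕ, (2:ℝ)⁻¹^(j+K₀+1) * dHLP ((V m).Sk (j+K₀+1)) ((V n).Sk (j+K₀+1)) := by
      unfold dM
      exact hsplit.symm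
    have hhead : (∑ j ∈ Finset.range K₀,
        (2:ℝ)⁻¹^(j+1) * dHLP ((V m).Sk (j+1)) ((V n).Sk (j+1))) ≤ ε/2 := by
      have hb : ∀ j ∈ Finset.range K₀,
          (2:ℝ)⁻¹^(j+1) * dHLP ((V m).Sk (j+1)) ((V n).Sk (j+1))
            ≤ (2:ℝ)⁻¹^(j+1) * (ε/2) := by
        intro j hj
        apply mul_le_mul_of_nonneg_left _ (by positivity)
        exact (hNfun j m (le_trans (Finset.le_sup hj) hm)
          n (le_trans (Finset.le_sup hj) hn)).le
      calc (∑ j ∈ Finset.range K₀,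
            (2:ℝ)⁻¹^(j+1) * dHLP ((V m).Sk (j+1)) ((V n).Sk (j+1)))
          ≤ ∑ j ∈ Finset.range K₀, (2:ℝ)⁻¹^(j+1) * (ε/2) := Finset.sum_le_sum hb
        _ = (∑ j ∈ Finset.range K₀, (2:ℝ)⁻¹^(j+1)) * (ε/2) := by
            rw [← Finset.sum_mul]
        _ ≤ 1 * (ε/2) := by
            apply mul_le_mul_of_nonneg_right _ (by positivity)
            calc (∑ j ∈ Finset.range K₀, (2:ℝ)⁻¹^(j+1))
                ≤ ∑' j : ℕ, (2:ℝ)⁻¹^(j+1) :=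
                  Summable.sum_le_tsum _ (fun i _ => by positivity) summable_half_pow
              _ = 1 := tsum_half_pow
        _ = ε/2 := one_mul _
    have hgeo' : Summable (fun j : ℕ => (2:ℝ)⁻¹^(j+K₀+1)) := by
      have he : (fun j : ℕ => (2:ℝ)⁻¹^(j+K₀+1)) = fun j => (2:ℝ)⁻¹^(j+1) * 2⁻¹^K₀ := by
        funext j
        rw [← pow_add]
        congr 1
        omega
      rw [he]; exact summable_half_pow.mul_right _
    have htail : (∑' j : ℕ,
        (2:ℝ)⁻¹^(j+K₀+1) * dHLP ((V m).Sk (j+K₀+1)) ((V n).Sk (j+K₀+1)))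
        ≤ (2:ℝ)⁻¹^K₀ := by
      have h1 : ∀ j:ℕ, (2:ℝ)⁻¹^(j+K₀+1) * dHLP ((V m).Sk (j+K₀+1)) ((V n).Sk (j+K₀+1))
          ≤ (2:ℝ)⁻¹^(j+K₀+1) := fun j => by
        calc (2:ℝ)⁻¹^(j+K₀+1) * dHLP ((V m).Sk (j+K₀+1)) ((V n).Sk (j+K₀+1))
            ≤ (2:ℝ)⁻¹^(j+K₀+1) * 1 :=
              mul_le_mul_of_nonneg_left (dHLP_Sk_le_one _ _ _) (by positivity)
          _ = (2:ℝ)⁻¹^(j+K₀+1) := mul_one _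
      calc (∑' j : ℕ,
            (2:ℝ)⁻¹^(j+K₀+1) * dHLP ((V m).Sk (j+K₀+1)) ((V n).Sk (j+K₀+1)))
          ≤ ∑' j : ℕ, (2:ℝ)⁻¹^(j+K₀+1) :=
            Summable.tsum_le_tsum h1 ((summable_nat_add_iff (f := fun j : ℕ =>
              (2:ℝ)⁻¹ ^ (j+1) * dHLP ((V m).Sk (j+1)) ((V n).Sk (j+1))) K₀).mpr hsum) hgeo'
        _ = ∑' j : ℕ, (2:ℝ)⁻¹^(j+1) * 2⁻¹^K₀ := by
            apply tsum_congr
            intro j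
            rw [← pow_add]
            congr 1
            omega
        _ = (∑' j : ℕ, (2:ℝ)⁻¹^(j+1)) * 2⁻¹^K₀ := tsum_mul_right
        _ = 1 * 2⁻¹^K₀ := by rw [tsum_half_pow]
        _ = 2⁻¹^K₀ := one_mul _
    rw [hdm]
    have := add_le_add hhead htail
    linarith

end
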